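/- Let n be an integer with n ≡ 5 (mod 8) and set m = (3n−1)/2. Then for every odd integer j with 1 ≤ j and j + 2 ≤ m, there exists g ∈ C(n, m) such that g (1,3) g⁻¹ = (j, j+2), where (1,3) and (j, j+2) denote transpositions. In other words, every odd-string triple-crossing transposition in S_{(3n−1)/2} is obtained by conjugating (1,3) by an element of the subgroup generated by the n-crossing permutations over S_{(3n−1)/2}. -/
import Mathlib


/-- The underlying function of the `n`-crossing permutation `π_j` over `{1, …, m}` (as a
function on `ℕ`): it sends `j + k` to `j + n - 1 - k` for `0 ≤ k ≤ n - 1` and fixes all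
other points. -/
def crossFun (n j i : ℕ) : ℕ :=
  if j ≤ i ∧ i < j + n then 2 * j + n - 1 - i else i

lemma crossFun_involutive (n j : ℕ) : Function.Involutive (crossFun n j) := by
  intro i
  unfold crossFun
  split_ifs <;> omega

/-- The `n`-crossing permutation `π_j`, viewed as a permutation of `ℕ` fixing every point
outside `{j, …, j + n - 1}`. -/
def crossPerm (n j : ℕ) : Equiv.Perm ℕ :=
  Function.Involutive.toPerm _ (crossFun_involutive n j)

/-- `C n m` is the subgroup of the symmetric group `S_m` (realized as permutations of `ℕ`
supported on `{1, …, m}`) generated by the `n`-crossing permutations `π_1, …, π_{m-n+1}`. -/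
def C (n m : ℕ) : Subgroup (Equiv.Perm ℕ) :=
  Subgroup.closure {σ | ∃ j, 1 ≤ j ∧ j ≤ m - n + 1 ∧ σ = crossPerm n j}

lemma crossPerm_apply (n j i : ℕ) : crossPerm n j i = crossFun n j i := rfl

lemma crossPerm_mem {n m : ℕ} (j : ℕ) (h1 : 1 ≤ j) (h2 : j ≤ m - n + 1) :
    crossPerm n j ∈ C n m :=
  Subgroup.subset_closure ⟨j, h1, h2, rfl⟩

theorem stmt11 (n : ℕ) (hn : n % 8 = 5)
    (j : ℕ) (hj : j % 2 = 1) (hj1 : 1 ≤ j) (hj2 : j + 2 ≤ (3 * n - 1) / 2) :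
    ∃ g ∈ C n ((3 * n - 1) / 2),
      g * Equiv.swap 1 3 * g⁻¹ = Equiv.swap j (j + 2) := by
  obtain ⟨k, hk⟩ : ∃ k, n = 8 * k + 5 := ⟨n / 8, by omega⟩
  have hm : (3 * n - 1) / 2 - n + 1 = 4 * k + 3 := by omega
  have e0 : crossPerm n 1 1 = n := by
    show crossFun n 1 1 = n; unfold crossFun; split_ifs <;> omega
  have e0' : crossPerm n 1 3 = n - 2 := by
    show crossFun n 1 3 = n - 2; unfold crossFun; split_ifs <;> omega
  rcases le_or_gt j n with hle | hgt
  · -- two crossings: g = π_a * π_1 with a = (j+1)/2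
    set a := (j + 1) / 2 with ha
    have ha1 : 1 ≤ a := by omega
    have ha2 : a ≤ 4 * k + 3 := by omega
    refine ⟨crossPerm n a * crossPerm n 1,
      mul_mem (crossPerm_mem a ha1 (by omega)) (crossPerm_mem 1 le_rfl (by omega)), ?_⟩
    rw [← Equiv.swap_apply_apply]
    have h1 : (crossPerm n a * crossPerm n 1) 1 = j := by
      rw [Equiv.Perm.mul_apply, e0]
      show crossFun n a n = j; unfold crossFun; split_ifs <;> omega
    have h3 : (crossPerm n a * crossPerm n 1) 3 = j + 2 := by
      rw [Equiv.Perm.mul_apply, e0']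
      show crossFun n a (n - 2) = j + 2; unfold crossFun; split_ifs <;> omega
    rw [h1, h3]
  · -- three crossings: g = π_b * π_a * π_1, d = (j-n+2)/2, a = d+1, b = 2d+1
    set d := (j - n + 2) / 2 with hd
    have hd2 : 2 ≤ d := by omega
    have hdmax : d ≤ 2 * k + 1 := by omega
    set a := d + 1 with ha
    set b := 2 * d + 1 with hb
    refine ⟨crossPerm n b * (crossPerm n a * crossPerm n 1),
      mul_mem (crossPerm_mem b (by omega) (by omega))
        (mul_mem (crossPerm_mem a (by omega) (by omega))
          (crossPerm_mem 1 le_rfl (by omega))), ?_⟩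
    rw [← Equiv.swap_apply_apply]
    have ea : crossPerm n a n = 2 * a - 1 := by
      show crossFun n a n = 2 * a - 1; unfold crossFun; split_ifs <;> omega
    have ea' : crossPerm n a (n - 2) = 2 * a + 1 := by
      show crossFun n a (n - 2) = 2 * a + 1; unfold crossFun; split_ifs <;> omega
    have h1 : (crossPerm n b * (crossPerm n a * crossPerm n 1)) 1 = j + 2 := by
      rw [Equiv.Perm.mul_apply, Equiv.Perm.mul_apply, e0, ea]
      show crossFun n b (2 * a - 1) = j + 2; unfold crossFun; split_ifs <;> omega
    have h3 : (crossPerm n b * (crossPerm n a * crossPerm n 1)) 3 = j := by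
      rw [Equiv.Perm.mul_apply, Equiv.Perm.mul_apply, e0', ea']
      show crossFun n b (2 * a + 1) = j; unfold crossFun; split_ifs <;> omega
    rw [h1, h3, Equiv.swap_comm]
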